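/- Let s > 0 and r̃ > 0 be real numbers, set r = s + r̃ and μ = r̃/r ∈ (0, 1), and define t : ℝ → ℝ by t(φ) = −s·sin(φ) + sqrt(s²·sin²(φ) + 2·s·r̃·(1 − cos(φ))). Let (φ_k)_{k≥0} be a real sequence with φ_k ∈ (0, π/2) for all k, φ_k → 0 as k → ∞, satisfying the recursion φ_{k+1} = −φ_k + 2·arctan( (r̃·sin(φ_k) − t(φ_k)·cos(φ_k)) / (r̃·cos(φ_k) + t(φ_k)·sin(φ_k)) ) for all k. Then the sequence converges to zero Q-linearly with rate 2·(1 − sqrt(1 − μ))/μ − 1, i.e., lim_{k→∞} φ_{k+1}/φ_k = 2·(1 − sqrt(1 − μ))/μ − 1. -/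

import Mathlib

open Real Filter Topology

private lemma slope_lim {f : ℝ → ℝ} (hf0 : f 0 = 0) (hd : HasDerivAt f 1 0) :
    Tendsto (fun x => f x / x) (𝓝[≠] (0:ℝ)) (𝓝 1) := by
  have h := hasDerivAt_iff_tendsto_slope.mp hd
  refine h.congr' ?_
  filter_upwards [self_mem_nhdsWithin] with x hx
  simp [slope_def_field, hf0]

private lemma sin_div_lim : Tendsto (fun x => Real.sin x / x) (𝓝[≠] (0:ℝ)) (𝓝 1) :=
  slope_lim Real.sin_zero (by simpa using Real.hasDerivAt_sin 0)

private lemma arctan_div_lim :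
    Tendsto (fun x => if x = 0 then (1:ℝ) else Real.arctan x / x) (𝓝 (0:ℝ)) (𝓝 1) := by
  rw [← nhdsNE_sup_pure]
  refine Tendsto.sup ?_ ?_
  · refine (slope_lim Real.arctan_zero (by simpa using Real.hasDerivAt_arctan 0)).congr' ?_
    filter_upwards [self_mem_nhdsWithin] with x hx
    simp only [Set.mem_compl_iff, Set.mem_singleton_iff] at hx
    rw [if_neg hx]
  · simpa using tendsto_pure_nhds (fun x => if x = 0 then (1:ℝ) else Real.arctan x / x) 0

/-- Theorem 5.4. The angles produced by the optimal-cut recursion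
converge to zero Q-linearly with rate `2·(1 - sqrt(1 - μ))/μ - 1`, where `μ = r̃/r`
and `r = s + r̃`. -/
theorem optimal_cut_convergence_rate (s rt : ℝ) (hs : 0 < s) (hrt : 0 < rt)
    (r : ℝ) (hr : r = s + rt) (μ : ℝ) (hμ : μ = rt / r)
    (t : ℝ → ℝ)
    (ht : ∀ φ : ℝ, t φ = -s * Real.sin φ +
      Real.sqrt (s ^ 2 * Real.sin φ ^ 2 + 2 * s * rt * (1 - Real.cos φ)))
    (φ : ℕ → ℝ) (hpos : ∀ k, 0 < φ k) (hlt : ∀ k, φ k < Real.pi / 2)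
    (hlim : Filter.Tendsto φ Filter.atTop (nhds 0))
    (hrec : ∀ k, φ (k + 1) = -φ k + 2 * Real.arctan
      ((rt * Real.sin (φ k) - t (φ k) * Real.cos (φ k)) /
        (rt * Real.cos (φ k) + t (φ k) * Real.sin (φ k)))) :
    Filter.Tendsto (fun k => φ (k + 1) / φ k) Filter.atTop
      (nhds (2 * (1 - Real.sqrt (1 - μ)) / μ - 1)) := by
  have hrpos : 0 < r := by rw [hr]; positivity
  have hφne : ∀ k, φ k ≠ 0 := fun k => (hpos k).ne'
  have hφin : Tendsto φ atTop (𝓝[≠] (0:ℝ)) :=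
    tendsto_nhdsWithin_of_tendsto_nhds_of_eventually_within _ hlim
      (Eventually.of_forall fun k => hφne k)
  -- basic limits
  have hS : Tendsto (fun k => Real.sin (φ k) / φ k) atTop (𝓝 1) := sin_div_lim.comp hφin
  have hcos : Tendsto (fun k => Real.cos (φ k)) atTop (𝓝 1) := by
    simpa [Function.comp_def] using (Real.continuous_cos.tendsto 0).comp hlim
  have hsin0 : Tendsto (fun k => Real.sin (φ k)) atTop (𝓝 0) := by
    simpa [Function.comp_def] using (Real.continuous_sin.tendsto 0).comp hlim
  have hφ2 : Tendsto (fun k => φ k / 2) atTop (𝓝[≠] (0:ℝ)) := by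
    refine tendsto_nhdsWithin_of_tendsto_nhds_of_eventually_within _ ?_
      (Eventually.of_forall fun k => by simp [hφne k])
    simpa using hlim.div_const 2
  have hS2 : Tendsto (fun k => Real.sin (φ k / 2) / (φ k / 2)) atTop (𝓝 1) :=
    sin_div_lim.comp hφ2
  -- (1 - cos φk)/φk² → 1/2
  have hC2 : Tendsto (fun k => (1 - Real.cos (φ k)) / (φ k)^2) atTop (𝓝 (1/2)) := by
    have heq : ∀ k, (1 - Real.cos (φ k)) / (φ k)^2
        = (Real.sin (φ k / 2) / (φ k / 2))^2 / 2 := by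
      intro k
      have hk : φ k ≠ 0 := hφne k
      have h1 : Real.sin (φ k / 2) ^ 2 = 1/2 - Real.cos (2 * (φ k / 2)) / 2 :=
        Real.sin_sq_eq_half_sub (φ k / 2)
      have h2 : (2 : ℝ) * (φ k / 2) = φ k := by ring
      rw [h2] at h1
      have h3 : 1 - Real.cos (φ k) = 2 * Real.sin (φ k / 2) ^ 2 := by linarith
      rw [h3]
      field_simp
    refine Tendsto.congr (fun k => (heq k).symm) ?_
    have := (hS2.pow 2).div_const 2
    simpa using this
  -- t(φk)/φk → sqrt (s*r) - s
  have hT : Tendsto (fun k => t (φ k) / φ k) atTop (𝓝 (Real.sqrt (s * r) - s)) := by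
    have heq : ∀ k, t (φ k) / φ k
        = -s * (Real.sin (φ k) / φ k)
          + Real.sqrt (s ^ 2 * (Real.sin (φ k) / φ k) ^ 2
              + 2 * s * rt * ((1 - Real.cos (φ k)) / (φ k)^2)) := by
      intro k
      have hk := hpos k
      have hk' : φ k ≠ 0 := hφne k
      rw [ht]
      have harg : s ^ 2 * (Real.sin (φ k) / φ k) ^ 2
            + 2 * s * rt * ((1 - Real.cos (φ k)) / (φ k)^2)
          = (s ^ 2 * Real.sin (φ k) ^ 2 + 2 * s * rt * (1 - Real.cos (φ k))) / (φ k)^2 := by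
        field_simp
      have hnn : 0 ≤ s ^ 2 * Real.sin (φ k) ^ 2 + 2 * s * rt * (1 - Real.cos (φ k)) := by
        nlinarith [Real.cos_le_one (φ k), sq_nonneg (Real.sin (φ k)), sq_nonneg s,
          mul_pos hs hrt]
      rw [harg, Real.sqrt_div hnn, Real.sqrt_sq hk.le]
      ring
    refine Tendsto.congr (fun k => (heq k).symm) ?_
    have hlim2 : Tendsto (fun k => s ^ 2 * (Real.sin (φ k) / φ k) ^ 2
        + 2 * s * rt * ((1 - Real.cos (φ k)) / (φ k)^2)) atTop
        (𝓝 (s ^ 2 * 1 ^ 2 + 2 * s * rt * (1/2))) :=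
      (((hS.pow 2).const_mul (s^2)).add (hC2.const_mul (2*s*rt)))
    have hsq : Tendsto (fun k => Real.sqrt (s ^ 2 * (Real.sin (φ k) / φ k) ^ 2
        + 2 * s * rt * ((1 - Real.cos (φ k)) / (φ k)^2))) atTop
        (𝓝 (Real.sqrt (s * r))) := by
      have := (Real.continuous_sqrt.tendsto _).comp hlim2
      rw [show s * r = s ^ 2 * 1 ^ 2 + 2 * s * rt * (1/2) by rw [hr]; ring]
      exact this
    have hval : Real.sqrt (s * r) - s = -s * 1 + Real.sqrt (s * r) := by ring
    rw [hval]
    exact (hS.const_mul (-s)).add hsq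
  -- the arctan argument and its limits
  set A : ℕ → ℝ := fun k => (rt * Real.sin (φ k) - t (φ k) * Real.cos (φ k)) /
      (rt * Real.cos (φ k) + t (φ k) * Real.sin (φ k)) with hA
  clear_value A
  have htφ : Tendsto (fun k => t (φ k)) atTop (𝓝 0) := by
    have : Tendsto (fun k => t (φ k) / φ k * φ k) atTop (𝓝 ((Real.sqrt (s*r) - s) * 0)) :=
      hT.mul hlim
    simpa [div_mul_cancel₀, hφne] using this.congr fun k => by
      rw [div_mul_cancel₀ _ (hφne k)]
  have hD : Tendsto (fun k => rt * Real.cos (φ k) + t (φ k) * Real.sin (φ k)) atTop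
      (𝓝 rt) := by
    have := (hcos.const_mul rt).add (htφ.mul hsin0)
    simpa using this
  have hAφ : Tendsto (fun k => A k / φ k) atTop
      (𝓝 ((rt - (Real.sqrt (s*r) - s)) / rt)) := by
    have heq : ∀ k, A k / φ k
        = (rt * (Real.sin (φ k) / φ k) - (t (φ k) / φ k) * Real.cos (φ k)) /
          (rt * Real.cos (φ k) + t (φ k) * Real.sin (φ k)) := by
      intro k
      have hk' : φ k ≠ 0 := hφne k
      rw [hA]
      simp only []
      rw [div_right_comm]
      congr 1
      field_simp
    refine Tendsto.congr (fun k => (heq k).symm) ?_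
    have hnum : Tendsto (fun k => rt * (Real.sin (φ k) / φ k)
        - (t (φ k) / φ k) * Real.cos (φ k)) atTop (𝓝 (rt - (Real.sqrt (s*r) - s))) := by
      have := (hS.const_mul rt).sub (hT.mul hcos)
      simpa using this
    exact hnum.div hD hrt.ne'
  have hA0 : Tendsto A atTop (𝓝 0) := by
    have : Tendsto (fun k => A k / φ k * φ k) atTop
        (𝓝 ((rt - (Real.sqrt (s*r) - s)) / rt * 0)) := hAφ.mul hlim
    simpa using this.congr fun k => by rw [div_mul_cancel₀ _ (hφne k)]
  have hH : Tendsto (fun k => if A k = 0 then (1:ℝ) else Real.arctan (A k) / A k)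
      atTop (𝓝 1) := arctan_div_lim.comp hA0
  -- pointwise identity for the ratio
  have hmain : ∀ k, φ (k + 1) / φ k
      = -1 + 2 * ((if A k = 0 then (1:ℝ) else Real.arctan (A k) / A k) * (A k / φ k)) := by
    intro k
    have hk' : φ k ≠ 0 := hφne k
    have hAk : (rt * Real.sin (φ k) - t (φ k) * Real.cos (φ k)) /
        (rt * Real.cos (φ k) + t (φ k) * Real.sin (φ k)) = A k := by rw [hA]
    rw [hrec k, hAk]
    generalize hH : (if A k = 0 then (1:ℝ) else Real.arctan (A k) / A k) = H
    have harc : Real.arctan (A k) = H * A k := by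
      subst hH
      by_cases h : A k = 0
      · simp [h]
      · rw [if_neg h, div_mul_cancel₀ _ h]
    rw [harc]
    field_simp
  have hfin : Tendsto (fun k => φ (k + 1) / φ k) atTop
      (𝓝 (-1 + 2 * (1 * ((rt - (Real.sqrt (s*r) - s)) / rt)))) := by
    refine Tendsto.congr (fun k => (hmain k).symm) ?_
    exact (tendsto_const_nhds).add (((hH.mul hAφ)).const_mul 2)
  convert hfin using 2
  have h1mu : 1 - μ = s / r := by
    rw [hμ, hr]; field_simp; ring
  have hsq : Real.sqrt (1 - μ) = Real.sqrt (s * r) / r := by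
    rw [h1mu, show s / r = s * r / r ^ 2 by field_simp,
      Real.sqrt_div (by positivity) (r^2), Real.sqrt_sq hrpos.le]
  rw [hsq, hμ]
  field_simp
  rw [hr]
  ring
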